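/- Let M and N be positive integers, let u, v_1, …, v_M : Fin N → ℂ be unit vectors, and set v_0 = −u. Let V be a unitary (M+1)×(M+1) complex matrix whose first column satisfies |V_{00}|² = 1/2 and |V_{j0}|² = 1/(2M) for all j ≥ 1. Define Ψ : Fin (M+1) × Fin N → ℂ by Ψ(q,n) = Σ_{j=0}^{M} conj(V_{jq})·V_{j0}·v_j(n). Then the probability of measuring outcome 0 on the first register, P(0) = Σ_{n} |Ψ(0,n)|², satisfies ‖u − (1/M)·Σ_{j=1}^{M} v_j‖² = 4·P(0). That is, the squared Euclidean distance from u to the centroid of v_1,…,v_M equals four times the success probability. -/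

import Mathlib

private lemma norm_sq_eq_sum' {N : ℕ} (w : EuclideanSpace ℂ (Fin N)) :
    ‖w‖ ^ 2 = ∑ n, ‖w n‖ ^ 2 := by
  rw [EuclideanSpace.norm_eq, Real.sq_sqrt (by positivity)]

/-- Euclidean-distance circuit: with `v_0 = −u` and `|V_{00}|² = 1/2`, `|V_{j0}|² = 1/(2M)`
for `j ≥ 1`, the squared distance from `u` to the centroid of `v_1,…,v_M` equals `4·P(0)`. -/
theorem stmt_8 (M N : ℕ) (hM : 0 < M) (hN : 0 < N)
    (u : EuclideanSpace ℂ (Fin N)) (hu : ‖u‖ = 1)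
    (v : Fin (M + 1) → EuclideanSpace ℂ (Fin N))
    (hv0 : v 0 = -u) (hv : ∀ j : Fin (M + 1), j ≠ 0 → ‖v j‖ = 1)
    (V : Matrix (Fin (M + 1)) (Fin (M + 1)) ℂ)
    (hV : V ∈ Matrix.unitaryGroup (Fin (M + 1)) ℂ)
    (hV00 : ‖V 0 0‖ ^ 2 = 1 / 2)
    (hVj0 : ∀ j : Fin (M + 1), j ≠ 0 → ‖V j 0‖ ^ 2 = 1 / (2 * M))
    (Ψ : EuclideanSpace ℂ (Fin (M + 1) × Fin N))
    (hΨ : ∀ q n, Ψ (q, n) = ∑ j, starRingEnd ℂ (V j q) * V j 0 * v j n) :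
    ‖u - ((M : ℂ))⁻¹ • ∑ j : Fin M, v j.succ‖ ^ 2 =
      4 * ∑ n, ‖Ψ (0, n)‖ ^ 2 := by
  have hMc : (M : ℂ) ≠ 0 := Nat.cast_ne_zero.mpr hM.ne'
  set c : EuclideanSpace ℂ (Fin N) := ((M : ℂ))⁻¹ • ∑ j : Fin M, v j.succ with hc
  have h0 : (starRingEnd ℂ) (V 0 0) * V 0 0 = (1 / 2 : ℂ) := by
    rw [← Complex.normSq_eq_conj_mul_self, Complex.normSq_eq_norm_sq, hV00]
    norm_num
  have hj : ∀ j : Fin M, (starRingEnd ℂ) (V j.succ 0) * V j.succ 0 = (1 / (2 * M) : ℂ) := by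
    intro j
    rw [← Complex.normSq_eq_conj_mul_self, Complex.normSq_eq_norm_sq,
      hVj0 j.succ (Fin.succ_ne_zero j)]
    push_cast
    ring
  have key : ∀ n, (u - c) n = (-2) * Ψ (0, n) := by
    intro n
    rw [hΨ, Fin.sum_univ_succ, h0]
    have : ∀ j : Fin M, (starRingEnd ℂ) (V j.succ 0) * V j.succ 0 * v j.succ n
        = (1 / (2 * M) : ℂ) * v j.succ n := fun j => by rw [hj j]
    rw [Finset.sum_congr rfl fun j _ => this j]
    have hsum : (∑ j : Fin M, v j.succ) n = ∑ j : Fin M, v j.succ n :=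
      by rw [WithLp.ofLp_sum]; exact Finset.sum_apply n Finset.univ _
    simp only [hc, PiLp.sub_apply, PiLp.smul_apply, smul_eq_mul, hsum, hv0, PiLp.neg_apply,
      ← Finset.mul_sum]
    field_simp
    ring
  rw [norm_sq_eq_sum' (u - c)]
  rw [Finset.mul_sum]
  refine Finset.sum_congr rfl fun n _ => ?_
  rw [key n, norm_mul, mul_pow]
  norm_num
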